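/- In D_∞, for the automorphism φ given by φ(t) = t⁻¹ and φ(x) = xt, the elements tⁿx and tᵐx are φ-twisted conjugate if and only if m = n or m = −n−1; hence there are infinitely many φ-twisted conjugacy classes. -/

import Mathlib

open DihedralGroup

private def phiFun : DihedralGroup 0 → DihedralGroup 0
  | r i => r (-i)
  | sr i => sr (1 - i)

private def phi : DihedralGroup 0 ≃* DihedralGroup 0 where
  toFun := phiFun
  invFun := phiFun
  left_inv := by rintro (i | i) <;> simp [phiFun]
  right_inv := by rintro (i | i) <;> simp [phiFun]
  map_mul' := by
    rintro (a | a) (b | b) <;>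
      simp only [phiFun, r_mul_r, r_mul_sr, sr_mul_r, sr_mul_sr] <;> congr 1 <;> ring

@[simp] private lemma phi_r (i : ZMod 0) : phi (r i) = r (-i) := rfl
@[simp] private lemma phi_sr (i : ZMod 0) : phi (sr i) = sr (1 - i) := rfl
@[simp] private lemma r_inv (i : ZMod 0) : (r i)⁻¹ = r (-i) := rfl
@[simp] private lemma sr_inv (i : ZMod 0) : (sr i)⁻¹ = sr i := rfl

private lemma r_one_zpow (k : ℤ) : (r 1 : DihedralGroup 0) ^ k = r k := by
  exact DihedralGroup.r_one_zpow k

private def inv_fun : DihedralGroup 0 → ℕ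
  | r _ => 0
  | sr i => (2 * i - 1).natAbs

@[simp] private lemma inv_fun_r (i : ZMod 0) : inv_fun (r i) = 0 := rfl
@[simp] private lemma inv_fun_sr (i : ZMod 0) : inv_fun (sr i) = (2 * i - 1).natAbs := rfl

private lemma inv_fun_const (a b : DihedralGroup 0)
    (h : ∃ w, phi w * a * w⁻¹ = b) : inv_fun a = inv_fun b := by
  obtain ⟨w, hw⟩ := h
  subst hw
  rcases w with k | k <;> rcases a with i | i <;>
    simp only [phi_r, phi_sr, r_inv, sr_inv, r_mul_r, r_mul_sr, sr_mul_r, sr_mul_sr,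
      inv_fun_r, inv_fun_sr]
  · congr 1
    ring_nf
    rfl
  · have : (2 : ZMod 0) * (k - (i - (1 - k))) - 1 = -(2 * i - 1) := by ring
    rw [this]
    exact (Int.natAbs_neg _).symm

theorem infinite_dihedral_twisted_classes :
    ∃ φ : DihedralGroup 0 ≃* DihedralGroup 0,
      φ (r 1) = (r 1)⁻¹ ∧ φ (sr 0) = sr 0 * r 1 ∧
      (∀ m n : ℤ,
        (∃ w, φ w * ((r 1) ^ n * sr 0) * w⁻¹ = (r 1) ^ m * sr 0) ↔ (m = n ∨ m = -n - 1)) ∧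
      Infinite (Quot (fun a b : DihedralGroup 0 => ∃ w, φ w * a * w⁻¹ = b)) := by
  refine ⟨phi, ?_, ?_, ?_, ?_⟩
  · rfl
  · rfl
  · intro m n
    have cast_inj : Function.Injective (Int.cast : ℤ → ZMod 0) := Int.cast_injective
    constructor
    · rintro ⟨w, hw⟩
      rw [DihedralGroup.r_one_zpow, DihedralGroup.r_one_zpow] at hw
      rcases w with k | k <;>
        simp only [phi_r, phi_sr, r_inv, sr_inv, r_mul_r, r_mul_sr, sr_mul_r, sr_mul_sr,
          sr.injEq] at hw
      · left
        apply cast_inj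
        linear_combination hw
      · right
        apply cast_inj
        push_cast
        linear_combination hw
    · rintro (rfl | rfl)
      · refine ⟨1, ?_⟩; rw [map_one, one_mul, inv_one, mul_one]
      · refine ⟨sr 0, ?_⟩
        rw [DihedralGroup.r_one_zpow, DihedralGroup.r_one_zpow]
        simp only [phi_sr, sr_inv, r_mul_sr, sr_mul_sr, sr_mul_r, r_mul_r, sr.injEq]
        push_cast
        ring
  · refine Infinite.of_injective
      (fun k : ℕ => Quot.mk _ (sr (2 * k) : DihedralGroup 0)) ?_
    intro a b hab
    have h := congrArg (Quot.lift inv_fun inv_fun_const) hab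
    simp only [Quot.lift_mk, inv_fun_sr] at h
    have ha : ((2 : ZMod 0) * (2 * a) - 1) = ((4 * a - 1 : ℤ) : ZMod 0) := by ring_nf; rfl
    have hb : ((2 : ZMod 0) * (2 * b) - 1) = ((4 * b - 1 : ℤ) : ZMod 0) := by ring_nf; rfl
    rw [ha, hb] at h
    have h2 : ((4 * (a:ℤ) - 1).natAbs : ℤ) = ((4 * (b:ℤ) - 1).natAbs : ℤ) := by
      rw [show ((4 * (a:ℤ) - 1 : ℤ) : ZMod 0).natAbs = (4 * (a:ℤ) - 1).natAbs from rfl,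
        show ((4 * (b:ℤ) - 1 : ℤ) : ZMod 0).natAbs = (4 * (b:ℤ) - 1).natAbs from rfl] at h
      exact_mod_cast h
    omega
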